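/- (Deterministic U-process increment bound.) Fix n ≥ 2, ε ∈ (0,1], Tmax > 0, a measurable space E and a function S : [0,∞) × E → [0,1]. Let x_1, …, x_{2n} be points of E × [0, Tmax) × [0,∞), write x_r = (z_r, t_r, d_r) and X_r = min(t_r, d_r). For a function g : [0, Tmax) → [ε, 1] define h^g(x_r, x_s) = 1{t_r < d_r}·1{S(t_r; z_r) < S(t_r; z_s)}·1{t_r < X_s}·g(t_r)^{-2}, its symmetrisation h̄^g(x_r, x_s) = (h^g(x_r, x_s) + h^g(x_s, x_r))/2, and the operator 𝕋_n(f) = Σ_{1≤i≠j≤n} [ f(x_{2i}, x_{2j}) + f(x_{2i}, x_{2j−1}) + f(x_{2i−1}, x_{2j}) + f(x_{2i−1}, x_{2j−1}) ]. Then for any two functions g, g' : [0, Tmax) → [ε, 1], 𝕋_n(|h̄^g − h̄^{g'}|) ≤ 2(n − 1) Σ_{r=1}^{2n} | g(t_r)^{-2} − g'(t_r)^{-2} |. -/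

import Mathlib

open scoped Classical

/-- The kernel `h^g(x, y) = 1{t_x < d_x}·1{S(t_x;z_x) < S(t_x;z_y)}·1{t_x < X_y}·g(t_x)⁻²`,
where `x = (z_x, t_x, d_x)` and `X_y = min(t_y, d_y)`. -/
noncomputable def hker {E : Type*} (S : ℝ → E → ℝ) (g : ℝ → ℝ)
    (x y : E × ℝ × ℝ) : ℝ :=
  (if x.2.1 < x.2.2 ∧ S x.2.1 x.1 < S x.2.1 y.1 ∧ x.2.1 < min y.2.1 y.2.2
    then (1 : ℝ) else 0) * ((g x.2.1) ^ 2)⁻¹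

/-- The symmetrisation `h̄^g(x, y) = (h^g(x, y) + h^g(y, x))/2`. -/
noncomputable def hbar {E : Type*} (S : ℝ → E → ℝ) (g : ℝ → ℝ)
    (x y : E × ℝ × ℝ) : ℝ :=
  (hker S g x y + hker S g y x) / 2

/-- The operator `𝕋ₙ(f) = Σ_{1≤i≠j≤n} [f(x_{2i}, x_{2j}) + f(x_{2i}, x_{2j−1})
+ f(x_{2i−1}, x_{2j}) + f(x_{2i−1}, x_{2j−1})]` (points indexed `1, …, 2n`). -/
noncomputable def Tn {E : Type*} (n : ℕ) (x : ℕ → E × ℝ × ℝ)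
    (f : (E × ℝ × ℝ) → (E × ℝ × ℝ) → ℝ) : ℝ :=
  ∑ i ∈ Finset.Icc 1 n, ∑ j ∈ Finset.Icc 1 n,
    if i ≠ j then
      f (x (2 * i)) (x (2 * j)) + f (x (2 * i)) (x (2 * j - 1)) +
        f (x (2 * i - 1)) (x (2 * j)) + f (x (2 * i - 1)) (x (2 * j - 1))
    else 0

lemma hker_abs_sub_le {E : Type*} (S : ℝ → E → ℝ) (g g' : ℝ → ℝ) (x y : E × ℝ × ℝ) :
    |hker S g x y - hker S g' x y| ≤ |((g x.2.1)^2)⁻¹ - ((g' x.2.1)^2)⁻¹| := by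
  unfold hker
  split_ifs with h
  · simp
  · simp

lemma hbar_abs_sub_le {E : Type*} (S : ℝ → E → ℝ) (g g' : ℝ → ℝ) (x y : E × ℝ × ℝ) :
    |hbar S g x y - hbar S g' x y| ≤
      (|((g x.2.1)^2)⁻¹ - ((g' x.2.1)^2)⁻¹| + |((g y.2.1)^2)⁻¹ - ((g' y.2.1)^2)⁻¹|)/2 := by
  have h1 := hker_abs_sub_le S g g' x y
  have h2 := hker_abs_sub_le S g g' y x
  unfold hbar
  rw [div_sub_div_same, show (hker S g x y + hker S g y x) - (hker S g' x y + hker S g' y x)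
    = (hker S g x y - hker S g' x y) + (hker S g y x - hker S g' y x) by ring]
  rw [abs_div, abs_two]
  have := abs_add_le (hker S g x y - hker S g' x y) (hker S g y x - hker S g' y x)
  linarith

lemma pair_sum (f : ℕ → ℝ) (n : ℕ) :
    ∑ r ∈ Finset.Icc 1 (2*n), f r = ∑ i ∈ Finset.Icc 1 n, (f (2*i) + f (2*i-1)) := by
  induction n with
  | zero => simp
  | succ m ih =>
    rw [show 2*(m+1) = (2*m+1)+1 by ring, Finset.sum_Icc_succ_top (by omega),
      Finset.sum_Icc_succ_top (by omega), ih, Finset.sum_Icc_succ_top (by omega : 1 ≤ m+1)]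
    simp only [show 2*(m+1) = 2*m+2 from by ring, show 2*(m+1)-1 = 2*m+1 from by omega,
      show 2*m+2-1 = 2*m+1 from by omega]
    ring

/-- **Deterministic U-process increment bound.** For points `x₁, …, x_{2n}` of
`E × [0, Tmax) × [0,∞)` and any two functions `g, g' : [0, Tmax) → [ε, 1]`,
`𝕋ₙ(|h̄^g − h̄^{g'}|) ≤ 2(n−1) Σ_{r=1}^{2n} |g(t_r)⁻² − g'(t_r)⁻²|`. -/
theorem stmt_9 {E : Type*} (S : ℝ → E → ℝ) (hS01 : ∀ t z, S t z ∈ Set.Icc (0 : ℝ) 1)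
    (n : ℕ) (hn : 2 ≤ n) (ε : ℝ) (hε : ε ∈ Set.Ioc (0 : ℝ) 1)
    (Tmax : ℝ) (hTmax : 0 < Tmax)
    (x : ℕ → E × ℝ × ℝ)
    (hx : ∀ r, 1 ≤ r → r ≤ 2 * n → (x r).2.1 ∈ Set.Ico (0 : ℝ) Tmax ∧ 0 ≤ (x r).2.2)
    (g g' : ℝ → ℝ)
    (hg : ∀ t ∈ Set.Ico (0 : ℝ) Tmax, g t ∈ Set.Icc ε 1)
    (hg' : ∀ t ∈ Set.Ico (0 : ℝ) Tmax, g' t ∈ Set.Icc ε 1) :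
    Tn n x (fun a b => |hbar S g a b - hbar S g' a b|) ≤
      2 * (n - 1 : ℝ) *
        ∑ r ∈ Finset.Icc 1 (2 * n), |((g (x r).2.1) ^ 2)⁻¹ - ((g' (x r).2.1) ^ 2)⁻¹| := by
  set D : ℕ → ℝ := fun r => |((g (x r).2.1) ^ 2)⁻¹ - ((g' (x r).2.1) ^ 2)⁻¹| with hD
  set A : ℕ → ℝ := fun i => D (2*i) + D (2*i-1) with hA
  have step1 : Tn n x (fun a b => |hbar S g a b - hbar S g' a b|) ≤
      ∑ i ∈ Finset.Icc 1 n, ∑ j ∈ Finset.Icc 1 n, if i ≠ j then A i + A j else 0 := by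
    unfold Tn
    refine Finset.sum_le_sum fun i _ => Finset.sum_le_sum fun j _ => ?_
    split_ifs with h
    · have h1 := hbar_abs_sub_le S g g' (x (2*i)) (x (2*j))
      have h2 := hbar_abs_sub_le S g g' (x (2*i)) (x (2*j-1))
      have h3 := hbar_abs_sub_le S g g' (x (2*i-1)) (x (2*j))
      have h4 := hbar_abs_sub_le S g g' (x (2*i-1)) (x (2*j-1))
      simp only [hD, hA]
      linarith
    · exact le_rfl
  have hcard : (Finset.Icc 1 n).card = n := by simp
  have step2 : ∑ i ∈ Finset.Icc 1 n, ∑ j ∈ Finset.Icc 1 n, (if i ≠ j then A i + A j else 0)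
      = 2 * (n - 1 : ℝ) * ∑ i ∈ Finset.Icc 1 n, A i := by
    have hsplit : ∀ i ∈ Finset.Icc 1 n,
        ∑ j ∈ Finset.Icc 1 n, (if i ≠ j then A i + A j else 0)
          = (n:ℝ) * A i + (∑ j ∈ Finset.Icc 1 n, A j) - 2 * A i := by
      intro i hi
      have hfun : ∀ j, (if i ≠ j then A i + A j else 0)
          = (A i + A j) - (if i = j then A i + A j else 0) := by
        intro j
        by_cases h : i = j <;> simp [h]
      simp_rw [hfun]
      rw [Finset.sum_sub_distrib, Finset.sum_add_distrib, Finset.sum_const, hcard,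
        Finset.sum_ite_eq (Finset.Icc 1 n) i (fun j => A i + A j), if_pos hi]
      push_cast
      ring
    rw [Finset.sum_congr rfl hsplit, Finset.sum_sub_distrib, Finset.sum_add_distrib,
      Finset.sum_const, hcard, ← Finset.mul_sum, nsmul_eq_mul]
    rw [← Finset.mul_sum]
    ring
  have step3 : ∑ i ∈ Finset.Icc 1 n, A i = ∑ r ∈ Finset.Icc 1 (2*n), D r :=
    (pair_sum D n).symm
  calc Tn n x (fun a b => |hbar S g a b - hbar S g' a b|)
      ≤ ∑ i ∈ Finset.Icc 1 n, ∑ j ∈ Finset.Icc 1 n, if i ≠ j then A i + A j else 0 := step1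
    _ = 2 * (n - 1 : ℝ) * ∑ i ∈ Finset.Icc 1 n, A i := step2
    _ = 2 * (n - 1 : ℝ) * ∑ r ∈ Finset.Icc 1 (2*n), D r := by rw [step3]
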